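/- For integers a, b, c with c ≥ a ≥ 0 and b ≥ 0, the sum over w from 0 to a of (binomial(a+b+w, w) * binomial(c-w, a-w)) equals binomial(1+a+b+c, a). -/

import Mathlib

lemma key_aux (p : ℕ) : ∀ m n : ℕ, p ≤ n →
    ∑ k ∈ Finset.range (p + 1),
      Nat.choose (m + k) k * Nat.choose (n - k) (p - k)
      = Nat.choose (m + n + 1) p := by
  induction p with
  | zero => intro m n _; simp
  | succ p ih =>
    intro m n hpn
    induction m with
    | zero =>
      -- hockey stick
      have h1 : ∀ k ∈ Finset.range (p + 2),
          Nat.choose (0 + k) k * Nat.choose (n - k) (p + 1 - k)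
            = Nat.choose (n - k) (n - (p + 1)) := by
        intro k hk
        simp only [Finset.mem_range] at hk
        have hk1 : k ≤ p + 1 := by omega
        rw [zero_add, Nat.choose_self, one_mul]
        have h2 : p + 1 - k ≤ n - k := by omega
        have h3 : (n - k) - (p + 1 - k) = n - (p + 1) := by omega
        rw [← Nat.choose_symm h2, h3]
      rw [Finset.sum_congr rfl h1]
      have h4 : ∑ k ∈ Finset.range (p + 2), Nat.choose (n - k) (n - (p + 1))
          = ∑ i ∈ Finset.Icc (n - (p + 1)) n, Nat.choose i (n - (p + 1)) := by
        apply Finset.sum_nbij' (fun k => n - k) (fun i => n - i)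
        · intro k hk; simp only [Finset.mem_range] at hk; simp only [Finset.mem_Icc]; omega
        · intro i hi; simp only [Finset.mem_Icc] at hi; simp only [Finset.mem_range]; omega
        · intro k hk; simp only [Finset.mem_range] at hk; omega
        · intro i hi; simp only [Finset.mem_Icc] at hi; omega
        · intro k hk; rfl
      rw [h4, Nat.sum_Icc_choose]
      have h5 : n - (p + 1) + 1 = n + 1 - (p + 1) := by omega
      rw [h5, Nat.choose_symm (by omega)]
      congr 1; omega
    | succ m ihm =>
      have hsplit : ∑ k ∈ Finset.range (p + 2),
          Nat.choose (m + 1 + k) k * Nat.choose (n - k) (p + 1 - k)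
          = (∑ j ∈ Finset.range (p + 1),
              Nat.choose (m + 2 + j) (j + 1) * Nat.choose (n - (j + 1)) (p - j))
            + Nat.choose n (p + 1) := by
        rw [Finset.sum_range_succ']
        simp only [Nat.choose_zero_right, Nat.sub_zero, Nat.choose_self]
        congr 1
        · apply Finset.sum_congr rfl; intro j _
          congr 2 <;> omega
        · ring
      rw [hsplit]
      have hpascal : ∀ j ∈ Finset.range (p + 1),
          Nat.choose (m + 2 + j) (j + 1) * Nat.choose (n - (j + 1)) (p - j)
          = Nat.choose (m + 1 + j) (j + 1) * Nat.choose (n - (j + 1)) (p - j)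
            + Nat.choose (m + 1 + j) j * Nat.choose (n - 1 - j) (p - j) := by
        intro j _
        have : m + 2 + j = (m + 1 + j) + 1 := by omega
        rw [this, Nat.choose_succ_succ' (m + 1 + j) j]
        have : n - (j + 1) = n - 1 - j := by omega
        rw [this]; ring
      rw [Finset.sum_congr rfl hpascal, Finset.sum_add_distrib]
      have hA : (∑ k ∈ Finset.range (p + 2),
              Nat.choose (m + k) k * Nat.choose (n - k) (p + 1 - k))
          = (∑ j ∈ Finset.range (p + 1),
          Nat.choose (m + 1 + j) (j + 1) * Nat.choose (n - (j + 1)) (p - j))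
            + Nat.choose n (p + 1) := by
        rw [Finset.sum_range_succ']
        simp only [Nat.choose_zero_right, Nat.sub_zero, Nat.choose_self]
        congr 1
        · apply Finset.sum_congr rfl; intro j _
          congr 2 <;> omega
        · ring
      have hB : ∑ j ∈ Finset.range (p + 1),
          Nat.choose (m + 1 + j) j * Nat.choose (n - 1 - j) (p - j)
          = Nat.choose (m + 1 + (n - 1) + 1) p := by
        apply ih (m + 1) (n - 1) (by omega)
      calc (∑ j ∈ Finset.range (p + 1),
              Nat.choose (m + 1 + j) (j + 1) * Nat.choose (n - (j + 1)) (p - j))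
            + (∑ j ∈ Finset.range (p + 1),
              Nat.choose (m + 1 + j) j * Nat.choose (n - 1 - j) (p - j))
            + Nat.choose n (p + 1)
          = ((∑ j ∈ Finset.range (p + 1),
              Nat.choose (m + 1 + j) (j + 1) * Nat.choose (n - (j + 1)) (p - j))
            + Nat.choose n (p + 1))
            + (∑ j ∈ Finset.range (p + 1),
              Nat.choose (m + 1 + j) j * Nat.choose (n - 1 - j) (p - j)) := by ring
        _ = Nat.choose (m + n + 1) (p + 1) + Nat.choose (m + 1 + (n - 1) + 1) p := by
              rw [← hA, ihm, hB]
        _ = Nat.choose (m + 1 + n + 1) (p + 1) := by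
              have h6 : m + 1 + (n - 1) + 1 = m + n + 1 := by omega
              rw [h6, show m + 1 + n + 1 = m + n + 1 + 1 by omega]
              have := Nat.choose_succ_succ' (m + n + 1) p
              omega

theorem stmt_0 (a b c : ℕ) (hac : a ≤ c) :
    ∑ w ∈ Finset.range (a + 1),
      Nat.choose (a + b + w) w * Nat.choose (c - w) (a - w)
      = Nat.choose (1 + a + b + c) a := by
  have := key_aux a (a + b) c hac
  rw [this]
  congr 1
  omega
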